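/- Let γ=(x,z): (I,t₀) → (ℝ²,(x₀,z₀)) and γ̃=(x̃,z̃): (Ĩ,t̃₀) → (ℝ²,(x̃₀,z̃₀)) be smooth curves with x₀ > 0 and x̃₀ > 0, and let 𝐳(t,θ)=(x(t)cosθ, x(t)sinθ, z(t)) and 𝐳̃ be their surfaces of revolution around the z-axis. If there exist a diffeomorphism germ φ: (I,t₀) → (Ĩ,t̃₀) and a diffeomorphism germ ψ = (ψ₁,ψ₂): (ℝ²,(x₀,z₀)) → (ℝ²,(x̃₀,z̃₀)) with ψ∘γ = γ̃∘φ, then Φ(t,θ) = (φ(t),θ) is a diffeomorphism germ at (t₀,θ₀), the map Ψ(X,Y,Z) = (Xψ₁(√(X²+Y²),Z)/√(X²+Y²), Yψ₁(√(X²+Y²),Z)/√(X²+Y²), ψ₂(√(X²+Y²),Z)) is a diffeomorphism germ at 𝐳(t₀,θ₀) = (x₀cosθ₀, x₀sinθ₀, z₀), and Ψ∘𝐳 = 𝐳̃∘Φ near (t₀,θ₀). -/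

import Mathlib

open Real

/-- `f` is a germ of diffeomorphism at `p`, sending `p` to `q`: `f` is smooth near `p`
and has a smooth local inverse near `q`. -/
def DiffeoGermAt {E F : Type*} [NormedAddCommGroup E] [NormedSpace ℝ E]
    [NormedAddCommGroup F] [NormedSpace ℝ F] (f : E → F) (p : E) (q : F) : Prop :=
  f p = q ∧ ∃ (U : Set E) (V : Set F) (g : F → E),
    IsOpen U ∧ p ∈ U ∧ IsOpen V ∧ q ∈ V ∧
    ContDiffOn ℝ (⊤ : ℕ∞) f U ∧ ContDiffOn ℝ (⊤ : ℕ∞) g V ∧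
    Set.MapsTo f U V ∧ Set.MapsTo g V U ∧
    (∀ p' ∈ U, g (f p') = p') ∧ (∀ q' ∈ V, f (g q') = q')

noncomputable def rad (q : ℝ × ℝ × ℝ) : ℝ := Real.sqrt (q.1 ^ 2 + q.2.1 ^ 2)

noncomputable def lift3 (u : ℝ × ℝ → ℝ × ℝ) (q : ℝ × ℝ × ℝ) : ℝ × ℝ × ℝ :=
  (q.1 * (u (rad q, q.2.2)).1 / rad q, q.2.1 * (u (rad q, q.2.2)).1 / rad q,
    (u (rad q, q.2.2)).2)

lemma rad_circle (a θ b : ℝ) (ha : 0 ≤ a) :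
    rad (a * Real.cos θ, a * Real.sin θ, b) = a := by
  have h : (a * Real.cos θ) ^ 2 + (a * Real.sin θ) ^ 2 = a ^ 2 := by
    have := Real.sin_sq_add_cos_sq θ
    nlinarith
  simp only [rad]
  rw [h, Real.sqrt_sq ha]

lemma lift3_circle (u : ℝ × ℝ → ℝ × ℝ) (a θ b : ℝ) (ha : 0 < a) :
    lift3 u (a * Real.cos θ, a * Real.sin θ, b) =
      ((u (a, b)).1 * Real.cos θ, (u (a, b)).1 * Real.sin θ, (u (a, b)).2) := by
  simp only [lift3, rad_circle a θ b ha.le, Prod.mk.injEq]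
  refine ⟨by field_simp, by field_simp, trivial⟩

lemma rad_lift (u : ℝ × ℝ → ℝ × ℝ) (q : ℝ × ℝ × ℝ) (hr : 0 < rad q)
    (ha : 0 < (u (rad q, q.2.2)).1) :
    rad (lift3 u q) = (u (rad q, q.2.2)).1 ∧
      (lift3 u q).2.2 = (u (rad q, q.2.2)).2 := by
  have hsq : q.1 ^ 2 + q.2.1 ^ 2 = rad q ^ 2 := by
    rw [rad, Real.sq_sqrt]; positivity
  refine ⟨?_, rfl⟩
  have h : (q.1 * (u (rad q, q.2.2)).1 / rad q) ^ 2 +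
      (q.2.1 * (u (rad q, q.2.2)).1 / rad q) ^ 2 = (u (rad q, q.2.2)).1 ^ 2 := by
    field_simp
    nlinarith [hsq]
  show Real.sqrt _ = _
  rw [show (lift3 u q).1 = q.1 * (u (rad q, q.2.2)).1 / rad q from rfl,
    show (lift3 u q).2.1 = q.2.1 * (u (rad q, q.2.2)).1 / rad q from rfl, h,
    Real.sqrt_sq ha.le]

lemma pair_rad_lift (u : ℝ × ℝ → ℝ × ℝ) (q : ℝ × ℝ × ℝ) (hr : 0 < rad q)
    (ha : 0 < (u (rad q, q.2.2)).1) :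
    (rad (lift3 u q), (lift3 u q).2.2) = u (rad q, q.2.2) := by
  obtain ⟨h1, h2⟩ := rad_lift u q hr ha
  rw [h1, h2]

lemma lift3_comp (u v : ℝ × ℝ → ℝ × ℝ) (q : ℝ × ℝ × ℝ) (hr : 0 < rad q)
    (ha : 0 < (u (rad q, q.2.2)).1)
    (hv : v (u (rad q, q.2.2)) = (rad q, q.2.2)) :
    lift3 v (lift3 u q) = q := by
  obtain ⟨h1, h2⟩ := rad_lift u q hr ha
  have hpair : (rad (lift3 u q), (lift3 u q).2.2) = u (rad q, q.2.2) := by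
    rw [h1, h2]
  have e : lift3 v (lift3 u q) =
      ((lift3 u q).1 * (v (u (rad q, q.2.2))).1 / (u (rad q, q.2.2)).1,
       (lift3 u q).2.1 * (v (u (rad q, q.2.2))).1 / (u (rad q, q.2.2)).1,
       (v (u (rad q, q.2.2))).2) := by
    rw [lift3, hpair, h1]
  rw [e, hv]
  show (_ * rad q / _, _ * rad q / _, q.2.2) = q
  rw [show (lift3 u q).1 = q.1 * (u (rad q, q.2.2)).1 / rad q from rfl,
    show (lift3 u q).2.1 = q.2.1 * (u (rad q, q.2.2)).1 / rad q from rfl]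
  have := hr.ne'
  have := ha.ne'
  refine Prod.ext ?_ (Prod.ext ?_ rfl) <;> (show _ = _ ; field_simp)

lemma lift3_contDiffAt {u : ℝ × ℝ → ℝ × ℝ} {U : Set (ℝ × ℝ)} (hU : IsOpen U)
    (hu : ContDiffOn ℝ (⊤ : ℕ∞) u U) {q : ℝ × ℝ × ℝ} (hr : 0 < rad q)
    (hq : (rad q, q.2.2) ∈ U) :
    ContDiffAt ℝ (⊤ : ℕ∞) (lift3 u) q := by
  have hs : q.1 ^ 2 + q.2.1 ^ 2 ≠ 0 := by
    intro h
    rw [rad, h, Real.sqrt_zero] at hr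
    exact lt_irrefl _ hr
  have hrc : ContDiffAt ℝ (⊤ : ℕ∞) rad q :=
    (Real.contDiffAt_sqrt hs).comp q (by fun_prop)
  have hc : ContDiffAt ℝ (⊤ : ℕ∞) (fun q : ℝ × ℝ × ℝ => (rad q, q.2.2)) q :=
    hrc.prodMk (by fun_prop)
  have huc : ContDiffAt ℝ (⊤ : ℕ∞) (fun q : ℝ × ℝ × ℝ => u (rad q, q.2.2)) q :=
    (hu.contDiffAt (hU.mem_nhds hq)).comp q hc
  exact ((contDiffAt_fst.mul huc.fst).div hrc hr.ne').prodMk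
    (((contDiffAt_snd.fst).mul huc.fst).div hrc hr.ne' |>.prodMk huc.snd)


/-- Let `γ = (x, z)` and `γ' = (x', z')` be smooth curves with
`x t₀ > 0`, `x' t₀' > 0`, and let `𝐳`, `𝐳'` be their surfaces of revolution around the
z-axis.  If a diffeomorphism germ `φ : (I, t₀) → (I', t₀')` and a diffeomorphism germ
`ψ = (ψ₁, ψ₂)` of `(ℝ², γ(t₀))` satisfy `ψ ∘ γ = γ' ∘ φ`, then `Φ(t,θ) = (φ t, θ)` and
`Ψ(X,Y,Z) = (Xψ₁(√(X²+Y²),Z)/√(X²+Y²), Yψ₁(√(X²+Y²),Z)/√(X²+Y²), ψ₂(√(X²+Y²),Z))` are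
diffeomorphism germs with `Ψ ∘ 𝐳 = 𝐳' ∘ Φ` near `(t₀, θ₀)`. -/
theorem equivalence_of_profile_curves_lifts_to_surfaces_of_revolution
    (x z x' z' : ℝ → ℝ) (t₀ t₀' θ₀ : ℝ)
    (hx : ContDiff ℝ (⊤ : ℕ∞) x) (hz : ContDiff ℝ (⊤ : ℕ∞) z)
    (hx' : ContDiff ℝ (⊤ : ℕ∞) x') (hz' : ContDiff ℝ (⊤ : ℕ∞) z')
    (hx0 : x t₀ > 0) (hx0' : x' t₀' > 0)
    (φ : ℝ → ℝ) (ψ₁ ψ₂ : ℝ × ℝ → ℝ)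
    (hφ : DiffeoGermAt φ t₀ t₀')
    (hψ : DiffeoGermAt (fun p => (ψ₁ p, ψ₂ p)) (x t₀, z t₀) (x' t₀', z' t₀'))
    (hcomm : ∀ᶠ t in nhds t₀,
      (ψ₁ (x t, z t), ψ₂ (x t, z t)) = (x' (φ t), z' (φ t)))
    (Φ : ℝ × ℝ → ℝ × ℝ) (hΦ : ∀ p : ℝ × ℝ, Φ p = (φ p.1, p.2))
    (Ψ : ℝ × ℝ × ℝ → ℝ × ℝ × ℝ)
    (hΨ : ∀ q : ℝ × ℝ × ℝ, Ψ q =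
      (q.1 * ψ₁ (Real.sqrt (q.1 ^ 2 + q.2.1 ^ 2), q.2.2) /
          Real.sqrt (q.1 ^ 2 + q.2.1 ^ 2),
       q.2.1 * ψ₁ (Real.sqrt (q.1 ^ 2 + q.2.1 ^ 2), q.2.2) /
          Real.sqrt (q.1 ^ 2 + q.2.1 ^ 2),
       ψ₂ (Real.sqrt (q.1 ^ 2 + q.2.1 ^ 2), q.2.2))) :
    DiffeoGermAt Φ (t₀, θ₀) (t₀', θ₀) ∧
    DiffeoGermAt Ψ (x t₀ * cos θ₀, x t₀ * sin θ₀, z t₀)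
      (x' t₀' * cos θ₀, x' t₀' * sin θ₀, z' t₀') ∧
    ∀ᶠ p : ℝ × ℝ in nhds (t₀, θ₀),
      Ψ (x p.1 * cos p.2, x p.1 * sin p.2, z p.1) =
        (x' ((Φ p).1) * cos ((Φ p).2), x' ((Φ p).1) * sin ((Φ p).2),
          z' ((Φ p).1)) := by
  have hΦeq : Φ = fun p : ℝ × ℝ => (φ p.1, p.2) := funext hΦ
  have hΨeq : Ψ = lift3 (fun p => (ψ₁ p, ψ₂ p)) := funext fun q => by
    rw [hΨ]; rfl
  subst hΦeq hΨeq
  set f : ℝ × ℝ → ℝ × ℝ := fun p => (ψ₁ p, ψ₂ p) with hf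
  obtain ⟨hφ0, Uφ, Vφ, gφ, hUφo, ht₀U, hVφo, ht₀'V, hφU, hgV, hφm, hgm, hgl, hgr⟩ := hφ
  obtain ⟨hψ0, U, V, g, hUo, hpU, hVo, hqV, hfU, hgVψ, hfm, hgmψ, hglψ, hgrψ⟩ := hψ
  have hψbase : f (x t₀, z t₀) = (x' t₀', z' t₀') := hψ0
  -- Part 1
  have part1 : DiffeoGermAt (fun p : ℝ × ℝ => (φ p.1, p.2)) (t₀, θ₀) (t₀', θ₀) := by
    refine ⟨by simp [hφ0], Uφ ×ˢ Set.univ, Vφ ×ˢ Set.univ,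
      fun p => (gφ p.1, p.2), hUφo.prod isOpen_univ, ⟨ht₀U, trivial⟩,
      hVφo.prod isOpen_univ, ⟨ht₀'V, trivial⟩, ?_, ?_, ?_, ?_, ?_, ?_⟩
    · exact (hφU.comp contDiffOn_fst fun p hp => hp.1).prodMk contDiffOn_snd
    · exact (hgV.comp contDiffOn_fst fun p hp => hp.1).prodMk contDiffOn_snd
    · exact fun p hp => ⟨hφm hp.1, trivial⟩
    · exact fun p hp => ⟨hgm hp.1, trivial⟩
    · exact fun p hp => by simp [hgl p.1 hp.1]
    · exact fun p hp => by simp [hgr p.1 hp.1]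
  refine ⟨part1, ?_, ?_⟩
  · -- Part 2
    -- shrunk 2d domains
    set U₀ : Set (ℝ × ℝ) := {p | p ∈ U ∧ 0 < p.1 ∧ f p ∈ V ∧ 0 < (f p).1} with hU₀
    set V₀ : Set (ℝ × ℝ) := {p | p ∈ V ∧ 0 < p.1 ∧ g p ∈ U ∧ 0 < (g p).1} with hV₀
    have hfst : IsOpen {p : ℝ × ℝ | 0 < p.1} := isOpen_lt continuous_const continuous_fst
    have hU₀o : IsOpen U₀ := by
      have h1 : IsOpen (U ∩ f ⁻¹' (V ∩ {p : ℝ × ℝ | 0 < p.1})) :=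
        hfU.continuousOn.isOpen_inter_preimage hUo (hVo.inter hfst)
      have : U₀ = (U ∩ f ⁻¹' (V ∩ {p : ℝ × ℝ | 0 < p.1})) ∩ {p : ℝ × ℝ | 0 < p.1} := by
        ext p; simp only [hU₀, Set.mem_setOf_eq, Set.mem_inter_iff, Set.mem_preimage]
        tauto
      rw [this]; exact h1.inter hfst
    have hV₀o : IsOpen V₀ := by
      have h1 : IsOpen (V ∩ g ⁻¹' (U ∩ {p : ℝ × ℝ | 0 < p.1})) :=
        hgVψ.continuousOn.isOpen_inter_preimage hVo (hUo.inter hfst)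
      have : V₀ = (V ∩ g ⁻¹' (U ∩ {p : ℝ × ℝ | 0 < p.1})) ∩ {p : ℝ × ℝ | 0 < p.1} := by
        ext p; simp only [hV₀, Set.mem_setOf_eq, Set.mem_inter_iff, Set.mem_preimage]
        tauto
      rw [this]; exact h1.inter hfst
    have hpU₀ : (x t₀, z t₀) ∈ U₀ := ⟨hpU, hx0, by rw [hψbase]; exact hqV,
      by rw [hψbase]; exact hx0'⟩
    have hg0 : g (x' t₀', z' t₀') = (x t₀, z t₀) := by
      rw [← hψbase]; exact hglψ _ hpU
    have hqV₀ : (x' t₀', z' t₀') ∈ V₀ := ⟨hqV, hx0',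
      by rw [hg0]; exact hpU, by rw [hg0]; exact hx0⟩
    -- 3d lifted domains
    set c : ℝ × ℝ × ℝ → ℝ × ℝ := fun q => (rad q, q.2.2) with hc
    have hccont : Continuous c := by
      apply Continuous.prodMk
      · exact Real.continuous_sqrt.comp (by fun_prop)
      · fun_prop
    set UU : Set (ℝ × ℝ × ℝ) := c ⁻¹' U₀ with hUU
    set VV : Set (ℝ × ℝ × ℝ) := c ⁻¹' V₀ with hVV
    have hUUo : IsOpen UU := hU₀o.preimage hccont
    have hVVo : IsOpen VV := hV₀o.preimage hccont
    -- for q ∈ UU, rad q > 0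
    have hradU : ∀ q ∈ UU, 0 < rad q := fun q hq => hq.2.1
    have hradV : ∀ q ∈ VV, 0 < rad q := fun q hq => hq.2.1
    -- base points
    have hbase1 : rad (x t₀ * cos θ₀, x t₀ * sin θ₀, z t₀) = x t₀ :=
      rad_circle _ _ _ hx0.le
    have hbase1' : rad (x' t₀' * cos θ₀, x' t₀' * sin θ₀, z' t₀') = x' t₀' :=
      rad_circle _ _ _ hx0'.le
    have hbU : (x t₀ * cos θ₀, x t₀ * sin θ₀, z t₀) ∈ UU := by
      show c _ ∈ U₀
      rw [hc]; simp only [hbase1]; exact hpU₀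
    have hbV : (x' t₀' * cos θ₀, x' t₀' * sin θ₀, z' t₀') ∈ VV := by
      show c _ ∈ V₀
      rw [hc]; simp only [hbase1']; exact hqV₀
    -- maps-to facts
    have hmapf : Set.MapsTo (lift3 f) UU VV := by
      intro q hq
      obtain ⟨hqU, hq1, hqfV, hqf1⟩ := hq
      show c (lift3 f q) ∈ V₀
      have := pair_rad_lift f q hq1 hqf1
      rw [hc]
      show (rad (lift3 f q), (lift3 f q).2.2) ∈ V₀
      rw [this]
      exact ⟨hqfV, hqf1, by rw [hglψ _ hqU]; exact hqU, by rw [hglψ _ hqU]; exact hq1⟩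
    have hmapg : Set.MapsTo (lift3 g) VV UU := by
      intro q hq
      obtain ⟨hqV', hq1, hqgU, hqg1⟩ := hq
      show c (lift3 g q) ∈ U₀
      have := pair_rad_lift g q hq1 hqg1
      rw [hc]
      show (rad (lift3 g q), (lift3 g q).2.2) ∈ U₀
      rw [this]
      exact ⟨hqgU, hqg1, by rw [hgrψ _ hqV']; exact hqV', by rw [hgrψ _ hqV']; exact hq1⟩
    refine ⟨?_, UU, VV, lift3 g, hUUo, hbU, hVVo, hbV, ?_, ?_, hmapf, hmapg, ?_, ?_⟩
    · -- base point value
      rw [lift3_circle f (x t₀) θ₀ (z t₀) hx0, hψbase]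
    · exact fun q hq => (lift3_contDiffAt hUo hfU (hradU q hq) hq.1).contDiffWithinAt
    · exact fun q hq => (lift3_contDiffAt hVo hgVψ (hradV q hq) hq.1).contDiffWithinAt
    · intro q hq
      exact lift3_comp f g q (hradU q hq) hq.2.2.2 (hglψ _ hq.1)
    · intro q hq
      exact lift3_comp g f q (hradV q hq) hq.2.2.2 (hgrψ _ hq.1)
  · -- Part 3
    have hxpos : ∀ᶠ t in nhds t₀, 0 < x t :=
      (hx.continuous.tendsto t₀).eventually (eventually_gt_nhds hx0)
    have hboth := hcomm.and hxpos
    rw [nhds_prod_eq]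
    have := hboth.prod_inl (nhds θ₀)
    filter_upwards [this] with p hp
    obtain ⟨hceq, hxp⟩ := hp
    rw [lift3_circle f (x p.1) p.2 (z p.1) hxp]
    have : f (x p.1, z p.1) = (x' (φ p.1), z' (φ p.1)) := hceq
    rw [this]
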